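/- The Gram matrix M of the twelve vectors a₁ = e₁, ..., a₄ = e₄ (standard basis of ℝ^4) and a₅,...,a₁₂ = (1/2)(1, ±1, ±1, ±1) is a standardized symmetric positive semidefinite matrix that is not a Spearman's rho matrix. In particular, the set of 12 × 12 Spearman's rho matrices is a proper subset of the set of 12 × 12 standardized symmetric positive semidefinite matrices. -/

import Mathlib

open MeasureTheory
open scoped Matrix

open Set Filter ProbabilityTheory Function

lemma map_cdf_eq_uniform (ν : Measure ℝ) [IsProbabilityMeasure ν] (hν : ∀ x, ν {x} = 0) :
    Measure.map (fun x => cdf ν x) ν = volume.restrict (Set.Icc (0:ℝ) 1) := by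
  set F : ℝ → ℝ := fun x => cdf ν x with hF
  have hmono : Monotone F := monotone_cdf ν
  have hFmeas : Measurable F := hmono.measurable
  -- left limits equal values
  have hleft : ∀ a, leftLim F a = F a := by
    intro a
    have h1 : ν {a} = ENNReal.ofReal (F a - leftLim F a) := by
      rw [← measure_cdf (μ := ν)]; exact (cdf ν).measure_singleton a
    have h2 : leftLim F a ≤ F a := hmono.leftLim_le le_rfl
    have h3 : F a - leftLim F a ≤ 0 := by
      by_contra hc
      push_neg at hc
      rw [hν a] at h1
      exact absurd h1.symm (by simpa [ENNReal.ofReal_eq_zero] using not_le.mpr hc)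
    linarith
  have key : ∀ t : ℝ, 0 ≤ t → t < 1 → ν {x | F x ≤ t} = ENNReal.ofReal t := by
    intro t ht0 ht1
    by_cases hne : {x | F x ≤ t}.Nonempty
    · -- bounded above
      obtain ⟨b, hb⟩ : ∃ b, t < F b := by
        have := tendsto_cdf_atTop (μ := ν)
        have : ∀ᶠ x in atTop, t < F x := this.eventually_const_lt ht1
        exact this.exists
      have hbdd : BddAbove {x | F x ≤ t} := by
        refine ⟨b, fun x hx => ?_⟩
        by_contra hc
        push_neg at hc
        exact absurd (hmono hc.le) (by simp only [mem_setOf_eq] at hx; linarith)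
      set a := sSup {x | F x ≤ t} with ha
      have hlt : ∀ x < a, F x ≤ t := by
        intro x hx
        obtain ⟨y, hy, hxy⟩ := exists_lt_of_lt_csSup hne hx
        exact le_trans (hmono hxy.le) hy
      have hFa_le : F a ≤ t := by
        rw [← hleft a]
        refine le_of_tendsto (hmono.tendsto_leftLim a) ?_
        filter_upwards [self_mem_nhdsWithin] with x hx using hlt x hx
      have hFa_ge : t ≤ F a := by
        have : ∀ x > a, t ≤ F x := by
          intro x hx
          by_contra hc
          push_neg at hc
          exact absurd (le_csSup hbdd (le_of_lt hc : F x ≤ t)) (not_le.mpr hx)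
        refine ge_of_tendsto (((cdf ν).right_continuous a).tendsto.mono_left
          (nhdsWithin_mono a Ioi_subset_Ici_self)) ?_
        filter_upwards [self_mem_nhdsWithin] with x hx using this x hx
      have hFa : F a = t := le_antisymm hFa_le hFa_ge
      have hsub1 : Iio a ⊆ {x | F x ≤ t} := fun x hx => hlt x hx
      have hsub2 : {x | F x ≤ t} ⊆ Iic a := fun x hx => le_csSup hbdd hx
      have hIio : ν (Iio a) = ENNReal.ofReal t := by
        have hsetsub : Iic a ⊆ Iio a ∪ {a} := by
          intro x hx
          rcases lt_or_eq_of_le (mem_Iic.mp hx) with h | h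
          · exact Or.inl h
          · exact Or.inr (by simp [h])
        have h1 : ν (Iic a) ≤ ν (Iio a) := by
          calc ν (Iic a) ≤ ν (Iio a ∪ {a}) := measure_mono hsetsub
            _ ≤ ν (Iio a) + ν {a} := measure_union_le _ _
            _ = ν (Iio a) := by rw [hν a, add_zero]
        have h2 : ν (Iio a) ≤ ν (Iic a) := measure_mono Iio_subset_Iic_self
        rw [le_antisymm h2 h1, ← ofReal_cdf (μ := ν) a]
        exact congrArg ENNReal.ofReal hFa
      have hIic : ν (Iic a) = ENNReal.ofReal t := by
        rw [← ofReal_cdf (μ := ν) a]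
        exact congrArg ENNReal.ofReal hFa
      exact le_antisymm (hIic ▸ measure_mono hsub2) (hIio ▸ measure_mono hsub1)
    · -- empty: t must be 0
      rw [not_nonempty_iff_eq_empty] at hne
      have ht : t = 0 := by
        by_contra hc
        have htpos : 0 < t := lt_of_le_of_ne ht0 (Ne.symm hc)
        have := tendsto_cdf_atBot (μ := ν)
        have : ∀ᶠ x in atBot, F x < t := this.eventually_lt_const htpos
        obtain ⟨x, hx⟩ := this.exists
        have hmem : x ∈ {x | F x ≤ t} := hx.le
        rw [hne] at hmem
        exact hmem
      subst ht
      rw [hne]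
      simp
  refine Measure.ext_of_Iic _ _ (fun t => ?_)
  rw [Measure.map_apply hFmeas measurableSet_Iic, Measure.restrict_apply measurableSet_Iic]
  have hpre : F ⁻¹' Iic t = {x | F x ≤ t} := rfl
  rcases lt_or_ge t 0 with ht | ht
  · have h1 : {x | F x ≤ t} = ∅ := by
      ext x; simp only [mem_setOf_eq, mem_empty_iff_false, iff_false, not_le]
      exact lt_of_lt_of_le ht (cdf_nonneg ν x)
    have h2 : Iic t ∩ Icc (0:ℝ) 1 = ∅ := by
      ext x; simp only [mem_inter_iff, mem_Iic, mem_Icc, mem_empty_iff_false, iff_false]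
      rintro ⟨h1, h2, _⟩; linarith
    rw [hpre, h1, h2]; simp
  rcases lt_or_ge t 1 with ht1 | ht1
  · have h2 : Iic t ∩ Icc (0:ℝ) 1 = Icc 0 t := by
      ext x; simp only [mem_inter_iff, mem_Iic, mem_Icc]
      constructor
      · rintro ⟨h1, h2, _⟩; exact ⟨h2, h1⟩
      · rintro ⟨h1, h2⟩; exact ⟨h2, h1, by linarith⟩
    rw [hpre, key t ht ht1, h2, Real.volume_Icc]
    simp
  · have h1 : {x | F x ≤ t} = univ := by
      ext x; simp only [mem_setOf_eq, mem_univ, iff_true]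
      exact le_trans (cdf_le_one ν x) ht1
    have h2 : Iic t ∩ Icc (0:ℝ) 1 = Icc 0 1 := by
      ext x; simp only [mem_inter_iff, mem_Iic, mem_Icc]
      constructor
      · rintro ⟨_, h⟩; exact h
      · rintro ⟨hx0, hx1⟩; exact ⟨by linarith, hx0, hx1⟩
    rw [hpre, h1, h2, Real.volume_Icc]
    simp [measure_univ]

lemma cdf_comp_moment {Ω : Type} [MeasurableSpace Ω] (μ : Measure Ω) [IsProbabilityMeasure μ]
    {f : Ω → ℝ} (hf : Measurable f) (h0 : ∀ x, Measure.map f μ {x} = 0)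
    (g : ℝ → ℝ) (hg : Continuous g) :
    ∫ ω, g (cdf (Measure.map f μ) (f ω)) ∂μ = ∫ x in Set.Icc (0:ℝ) 1, g x := by
  have hpm : IsProbabilityMeasure (Measure.map f μ) := Measure.isProbabilityMeasure_map hf.aemeasurable
  have hcdfm : Measurable fun x => cdf (Measure.map f μ) x := (monotone_cdf _).measurable
  rw [← map_cdf_eq_uniform (Measure.map f μ) h0,
      Measure.map_map hcdfm hf,
      integral_map ((hcdfm.comp hf)).aemeasurable hg.aestronglyMeasurable]
  rfl

lemma unif_moment (n : ℕ) :
    ∫ x in Set.Icc (0:ℝ) 1, (x - 1/2) ^ n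
      = ((1/2:ℝ) ^ (n+1) - (-1/2) ^ (n+1)) / (n+1) := by
  rw [MeasureTheory.integral_Icc_eq_integral_Ioc,
      ← intervalIntegral.integral_of_le (by norm_num : (0:ℝ) ≤ 1),
      intervalIntegral.integral_comp_sub_right (fun x => x ^ n) (1/2)]
  norm_num [integral_pow]

/-- `R` is a Spearman's rho matrix if there is a random vector `X` with continuous
marginal distributions whose matrix of pairwise Spearman rank correlations
`12 * E[F_i(X_i) F_j(X_j)] - 3` is `R`, where `F_i` is the cdf of `X_i`. -/
def IsSpearmanMatrix {d : ℕ} (R : Matrix (Fin d) (Fin d) ℝ) : Prop :=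
  ∃ (Ω : Type) (_ : MeasurableSpace Ω) (μ : Measure Ω) (_ : IsProbabilityMeasure μ)
    (X : Ω → Fin d → ℝ),
    (∀ i, Measurable fun ω => X ω i) ∧
    (∀ i (x : ℝ), Measure.map (fun ω => X ω i) μ {x} = 0) ∧
    ∀ i j, R i j =
      12 * (∫ ω, ProbabilityTheory.cdf (Measure.map (fun ω' => X ω' i) μ) (X ω i) *
        ProbabilityTheory.cdf (Measure.map (fun ω' => X ω' j) μ) (X ω j) ∂μ) - 3

lemma spearman_data {d : ℕ} {R : Matrix (Fin d) (Fin d) ℝ} (hsp : IsSpearmanMatrix R) :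
    ∃ (Ω : Type) (_ : MeasurableSpace Ω) (μ : Measure Ω) (_ : IsProbabilityMeasure μ)
      (h : Fin d → Ω → ℝ),
      (∀ i, Measurable (h i)) ∧ (∀ i ω, |h i ω| ≤ 1/2) ∧
      (∀ i, ∫ ω, (h i ω) ^ 2 ∂μ = 1/12) ∧
      (∀ i, ∫ ω, (h i ω) ^ 4 ∂μ = 1/80) ∧
      (∀ i j, ∫ ω, h i ω * h j ω ∂μ = R i j / 12) := by
  obtain ⟨Ω, m, μ, hprob, X, hXm, hX0, hR⟩ := hsp
  set G : Fin d → Ω → ℝ := fun i ω => cdf (Measure.map (fun ω' => X ω' i) μ) (X ω i) with hG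
  have hGmeas : ∀ i, Measurable (G i) := fun i => (monotone_cdf _).measurable.comp (hXm i)
  have hG0 : ∀ i ω, 0 ≤ G i ω := fun i ω => cdf_nonneg _ _
  have hG1 : ∀ i ω, G i ω ≤ 1 := fun i ω => cdf_le_one _ _
  have hmom : ∀ (i : Fin d) (n : ℕ), ∫ ω, (G i ω - 1/2) ^ n ∂μ
      = ((1/2:ℝ) ^ (n+1) - (-1/2) ^ (n+1)) / (n+1) := by
    intro i n
    rw [← unif_moment n]
    exact cdf_comp_moment μ (hXm i) (hX0 i) (fun x => (x - 1/2)^n)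
      ((continuous_id.sub continuous_const).pow n)
  have hint : ∀ (f : Ω → ℝ) (C : ℝ), Measurable f → (∀ ω, |f ω| ≤ C) → Integrable f μ :=
    fun f C hm hb => (integrable_const C).mono' hm.aestronglyMeasurable
      (ae_of_all _ fun ω => by simpa [Real.norm_eq_abs] using hb ω)
  have hbd : ∀ i ω, |G i ω - 1/2| ≤ 1/2 := by
    intro i ω
    rw [abs_le]
    constructor <;> [linarith [hG0 i ω]; linarith [hG1 i ω]]
  refine ⟨Ω, m, μ, hprob, fun i ω => G i ω - 1/2,
    fun i => (hGmeas i).sub measurable_const, hbd, ?_, ?_, ?_⟩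
  · intro i
    rw [hmom i 2]; norm_num
  · intro i
    rw [hmom i 4]; norm_num
  · intro i j
    have hm1 : ∫ ω, (G i ω - 1/2) ∂μ = 0 := by
      have := hmom i 1
      norm_num at this
      simpa using this
    have hm1j : ∫ ω, (G j ω - 1/2) ∂μ = 0 := by
      have := hmom j 1
      norm_num at this
      simpa using this
    have hintGG : Integrable (fun ω => G i ω * G j ω) μ :=
      hint _ 1 ((hGmeas i).mul (hGmeas j)) (fun ω => by
        rw [abs_mul]
        calc |G i ω| * |G j ω| ≤ 1 * 1 := by
              apply mul_le_mul _ _ (abs_nonneg _) zero_le_one <;>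
                rw [abs_le] <;> constructor <;>
                  first
                  | linarith [hG0 i ω, hG1 i ω]
                  | linarith [hG0 j ω, hG1 j ω]
          _ = 1 := by norm_num)
    have hinti : Integrable (fun ω => G i ω - 1/2) μ :=
      hint _ (1/2) ((hGmeas i).sub measurable_const) (hbd i)
    have hintj : Integrable (fun ω => G j ω - 1/2) μ :=
      hint _ (1/2) ((hGmeas j).sub measurable_const) (hbd j)
    have hpt : (fun ω => (G i ω - 1/2) * (G j ω - 1/2))
        = fun ω => G i ω * G j ω - ((1/2) * (G i ω - 1/2) + ((1/2) * (G j ω - 1/2) + 1/4)) := by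
      funext ω; ring
    have hGG : ∫ ω, G i ω * G j ω ∂μ = (R i j + 3) / 12 := by
      have h' : R i j = 12 * ∫ ω, G i ω * G j ω ∂μ - 3 := hR i j
      linarith
    have hA : Integrable (fun ω => (1/2) * (G j ω - 1/2) + 1/4) μ := by
      exact (hintj.const_mul (1/2)).add (integrable_const (1/4 : ℝ))
    have hB : Integrable (fun ω => (1/2) * (G i ω - 1/2) + ((1/2) * (G j ω - 1/2) + 1/4)) μ := by
      exact (hinti.const_mul (1/2)).add hA
    have hsum2 : ∫ ω, ((1/2) * (G i ω - 1/2) + ((1/2) * (G j ω - 1/2) + 1/4)) ∂μ = 1/4 := by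
      rw [integral_add (hinti.const_mul (1/2)) hA,
        integral_add (hintj.const_mul (1/2)) (integrable_const (1/4 : ℝ)),
        integral_const_mul, integral_const_mul, hm1, hm1j, integral_const]
      simp [measure_univ]
    rw [hpt, integral_sub hintGG hB, hsum2, hGG]
    ring


lemma spearman_psd {d : ℕ} {R : Matrix (Fin d) (Fin d) ℝ} (hsp : IsSpearmanMatrix R) :
    R.PosSemidef ∧ ∀ i, R i i = 1 := by
  obtain ⟨Ω, m, μ, hprob, h, hmeas, hbd, h2, h4, hprod⟩ := spearman_data hsp
  have hint : ∀ (f : Ω → ℝ) (C : ℝ), Measurable f → (∀ ω, |f ω| ≤ C) → Integrable f μ :=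
    fun f C hm hb => (integrable_const C).mono' hm.aestronglyMeasurable
      (ae_of_all _ fun ω => by simpa [Real.norm_eq_abs] using hb ω)
  have hint2 : ∀ i j, Integrable (fun ω => h i ω * h j ω) μ := fun i j =>
    hint _ 1 ((hmeas i).mul (hmeas j)) (fun ω => by
      rw [abs_mul]
      calc |h i ω| * |h j ω| ≤ (1/2) * (1/2) :=
            mul_le_mul (hbd i ω) (hbd j ω) (abs_nonneg _) (by norm_num)
        _ ≤ 1 := by norm_num)
  have hRval : ∀ i j, R i j = 12 * ∫ ω, h i ω * h j ω ∂μ := fun i j => by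
    have := hprod i j; linarith
  have hdiag : ∀ i, R i i = 1 := fun i => by
    have hh : (fun ω => h i ω * h i ω) = fun ω => (h i ω)^2 := by funext ω; ring
    rw [hRval i i, hh, h2 i]; norm_num
  refine ⟨Matrix.PosSemidef.of_dotProduct_mulVec_nonneg ?_ ?_, hdiag⟩
  · ext i j
    have hsymm : R j i = R i j := by
      rw [hRval, hRval]
      congr 1
      exact integral_congr_ae (ae_of_all _ fun ω => mul_comm _ _)
    simpa [Matrix.conjTranspose_apply] using hsymm
  · intro x
    have hs : ∀ i j : Fin d, Integrable (fun ω => (x i * x j) * (h i ω * h j ω)) μ :=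
      fun i j => (hint2 i j).const_mul _
    have hsum : ∫ ω, (∑ i, x i * h i ω)^2 ∂μ
        = ∑ i, ∑ j, (x i * x j) * ∫ ω, h i ω * h j ω ∂μ := by
      have hpt : (fun ω => (∑ i, x i * h i ω)^2)
          = fun ω => ∑ i, ∑ j, (x i * x j) * (h i ω * h j ω) := by
        funext ω
        rw [sq, Finset.sum_mul_sum]
        exact Finset.sum_congr rfl fun i _ => Finset.sum_congr rfl fun j _ => by ring
      rw [hpt, integral_finset_sum _ (fun i _ => integrable_finset_sum _ (fun j _ => hs i j))]
      refine Finset.sum_congr rfl fun i _ => ?_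
      rw [integral_finset_sum _ (fun j _ => hs i j)]
      exact Finset.sum_congr rfl fun j _ => integral_const_mul _ _
    have hform : dotProduct (star x) (R.mulVec x) = 12 * ∫ ω, (∑ i, x i * h i ω)^2 ∂μ := by
      calc dotProduct (star x) (R.mulVec x) = ∑ i, ∑ j, x i * (R i j * x j) := by
            simp [dotProduct, Matrix.mulVec, Finset.mul_sum]
        _ = 12 * ∫ ω, (∑ i, x i * h i ω)^2 ∂μ := by
            rw [hsum, Finset.mul_sum]
            refine Finset.sum_congr rfl fun i _ => ?_
            rw [Finset.mul_sum]
            refine Finset.sum_congr rfl fun j _ => ?_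
            rw [hRval i j]; ring
    rw [hform]
    have : (0:ℝ) ≤ ∫ ω, (∑ i, x i * h i ω)^2 ∂μ := integral_nonneg fun ω => sq_nonneg _
    positivity

noncomputable def paperVecs : Matrix (Fin 12) (Fin 4) ℝ :=
  !![1, 0, 0, 0;
     0, 1, 0, 0;
     0, 0, 1, 0;
     0, 0, 0, 1;
     1/2,  1/2,  1/2,  1/2;
     1/2,  1/2,  1/2, -1/2;
     1/2,  1/2, -1/2,  1/2;
     1/2,  1/2, -1/2, -1/2;
     1/2, -1/2,  1/2,  1/2;
     1/2, -1/2,  1/2, -1/2;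
     1/2, -1/2, -1/2,  1/2;
     1/2, -1/2, -1/2, -1/2]

/-- The Gram matrix of the twelve vectors. -/
noncomputable def gramM : Matrix (Fin 12) (Fin 12) ℝ := paperVecs * paperVecsᵀ

lemma gramM_apply (i j : Fin 12) : gramM i j = ∑ m : Fin 4, paperVecs i m * paperVecs j m := by
  simp [gramM, Matrix.mul_apply, Matrix.transpose_apply]

noncomputable abbrev emb4 : Fin 4 → Fin 12 := ![0, 1, 2, 3]

lemma pv_abs_le (k : Fin 12) (j : Fin 4) : |paperVecs k j| ≤ 1 := by
  fin_cases k <;> fin_cases j <;> norm_num [paperVecs, abs_le]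

lemma gramM_diag (k : Fin 12) : gramM k k = 1 := by
  fin_cases k <;> norm_num [gramM_apply, Fin.sum_univ_four, paperVecs, Matrix.cons_val_two, Matrix.cons_val_three, Matrix.vecHead, Matrix.vecTail]

lemma gramM_emb (k : Fin 12) (j : Fin 4) : gramM k (emb4 j) = paperVecs k j := by
  rw [gramM_apply]
  fin_cases j <;> norm_num [Fin.sum_univ_four, paperVecs, emb4, Matrix.cons_val_two, Matrix.cons_val_three, Matrix.vecHead, Matrix.vecTail]

lemma pv_emb (j l : Fin 4) : paperVecs (emb4 j) l = if j = l then 1 else 0 := by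
  fin_cases j <;> fin_cases l <;> norm_num [paperVecs, emb4, Fin.ext_iff, Matrix.cons_val_two, Matrix.cons_val_three, Matrix.vecHead, Matrix.vecTail]

lemma zero_var_id (k : Fin 12) :
    gramM k k - 2 * ∑ j : Fin 4, paperVecs k j * gramM k (emb4 j)
      + ∑ j : Fin 4, ∑ l : Fin 4, (paperVecs k j * paperVecs k l) * gramM (emb4 j) (emb4 l) = 0 := by
  have hS : ∑ j : Fin 4, paperVecs k j * paperVecs k j = 1 := by
    rw [← gramM_apply, gramM_diag]
  rw [gramM_diag]
  simp only [gramM_emb]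
  have h2 : ∀ j : Fin 4, ∑ l : Fin 4, (paperVecs k j * paperVecs k l) * paperVecs (emb4 j) l
      = paperVecs k j * paperVecs k j := by
    intro j
    rw [Finset.sum_eq_single j]
    · rw [pv_emb]; simp
    · intro l _ hl
      rw [pv_emb]
      simp [Ne.symm hl]
    · simp
  rw [Finset.sum_congr rfl (fun j _ => h2 j), hS]
  norm_num

set_option maxHeartbeats 4000000 in
lemma quartic_id (v : Fin 4 → ℝ) :
    ∑ k : Fin 12, (∑ j : Fin 4, paperVecs k j * v j)^4
      = 3/2 * (∑ j : Fin 4, (v j)^2)^2 := by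
  simp only [Fin.sum_univ_succ, Fin.sum_univ_zero, paperVecs, Matrix.of_apply,
    Matrix.cons_val_zero, Matrix.cons_val_succ]
  ring

lemma gramM_not_spearman' : ¬ IsSpearmanMatrix gramM := by
  intro hsp
  obtain ⟨Ω, m, μ, hprob, h, hmeas, hbd, h2, h4, hprod⟩ := spearman_data hsp
  have hint : ∀ (f : Ω → ℝ) (C : ℝ), Measurable f → (∀ ω, |f ω| ≤ C) → Integrable f μ :=
    fun f C hm hb => (integrable_const C).mono' hm.aestronglyMeasurable
      (ae_of_all _ fun ω => by simpa [Real.norm_eq_abs] using hb ω)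
  have hint2 : ∀ i j, Integrable (fun ω => h i ω * h j ω) μ := fun i j =>
    hint _ 1 ((hmeas i).mul (hmeas j)) (fun ω => by
      rw [abs_mul]
      calc |h i ω| * |h j ω| ≤ (1/2) * (1/2) :=
            mul_le_mul (hbd i ω) (hbd j ω) (abs_nonneg _) (by norm_num)
        _ ≤ 1 := by norm_num)
  set D : Fin 12 → Ω → ℝ := fun k ω => ∑ j : Fin 4, paperVecs k j * h (emb4 j) ω with hD
  have Dmeas : ∀ k, Measurable (D k) := fun k =>
    Finset.measurable_sum _ (fun j _ => (hmeas (emb4 j)).const_mul _)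
  have Dbd : ∀ k ω, |D k ω| ≤ 2 := by
    intro k ω
    calc |D k ω| ≤ ∑ j : Fin 4, |paperVecs k j * h (emb4 j) ω| :=
          Finset.abs_sum_le_sum_abs _ _
      _ ≤ ∑ _j : Fin 4, (1/2 : ℝ) := by
          refine Finset.sum_le_sum fun j _ => ?_
          rw [abs_mul]
          calc |paperVecs k j| * |h (emb4 j) ω| ≤ 1 * (1/2) :=
                mul_le_mul (pv_abs_le k j) (hbd _ ω) (abs_nonneg _) zero_le_one
            _ = 1/2 := by norm_num
      _ ≤ 2 := by norm_num
  -- step 1 : ∫ (h k - D k)^2 = 0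
  have hzero : ∀ k, ∫ ω, (h k ω - D k ω)^2 ∂μ = 0 := by
    intro k
    have hB : Integrable (fun ω => ∑ j : Fin 4, paperVecs k j * (h k ω * h (emb4 j) ω)) μ :=
      integrable_finset_sum _ fun j _ => (hint2 k (emb4 j)).const_mul _
    have hC : Integrable (fun ω => ∑ j : Fin 4, ∑ l : Fin 4,
        (paperVecs k j * paperVecs k l) * (h (emb4 j) ω * h (emb4 l) ω)) μ :=
      integrable_finset_sum _ fun j _ => integrable_finset_sum _ fun l _ =>
        (hint2 (emb4 j) (emb4 l)).const_mul _
    have hpt : (fun ω => (h k ω - D k ω)^2) = fun ω =>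
        h k ω * h k ω - 2 * (∑ j : Fin 4, paperVecs k j * (h k ω * h (emb4 j) ω))
          + ∑ j : Fin 4, ∑ l : Fin 4,
              (paperVecs k j * paperVecs k l) * (h (emb4 j) ω * h (emb4 l) ω) := by
      funext ω
      have hD1 : h k ω * D k ω = ∑ j : Fin 4, paperVecs k j * (h k ω * h (emb4 j) ω) := by
        rw [hD, Finset.mul_sum]
        exact Finset.sum_congr rfl fun j _ => by ring
      have hD2 : D k ω * D k ω = ∑ j : Fin 4, ∑ l : Fin 4,
          (paperVecs k j * paperVecs k l) * (h (emb4 j) ω * h (emb4 l) ω) := by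
        rw [hD, Finset.sum_mul_sum]
        exact Finset.sum_congr rfl fun j _ => Finset.sum_congr rfl fun l _ => by ring
      calc (h k ω - D k ω)^2 = h k ω * h k ω - 2 * (h k ω * D k ω) + D k ω * D k ω := by ring
        _ = _ := by rw [hD1, hD2]
    have hA2 : Integrable (fun ω => h k ω * h k ω
        - 2 * ∑ j : Fin 4, paperVecs k j * (h k ω * h (emb4 j) ω)) μ :=
      (hint2 k k).sub (hB.const_mul 2)
    rw [hpt, integral_add hA2 hC,
      integral_sub (hint2 k k) (hB.const_mul 2), integral_const_mul]
    have hBv : ∫ ω, (∑ j : Fin 4, paperVecs k j * (h k ω * h (emb4 j) ω)) ∂μ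
        = ∑ j : Fin 4, paperVecs k j * (gramM k (emb4 j) / 12) := by
      rw [integral_finset_sum _ fun j _ => (hint2 k (emb4 j)).const_mul _]
      exact Finset.sum_congr rfl fun j _ => by rw [integral_const_mul, hprod]
    have hCv : ∫ ω, (∑ j : Fin 4, ∑ l : Fin 4,
        (paperVecs k j * paperVecs k l) * (h (emb4 j) ω * h (emb4 l) ω)) ∂μ
        = ∑ j : Fin 4, ∑ l : Fin 4,
            (paperVecs k j * paperVecs k l) * (gramM (emb4 j) (emb4 l) / 12) := by
      rw [integral_finset_sum _ fun j _ => integrable_finset_sum _ fun l _ =>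
        (hint2 (emb4 j) (emb4 l)).const_mul _]
      refine Finset.sum_congr rfl fun j _ => ?_
      rw [integral_finset_sum _ fun l _ => (hint2 (emb4 j) (emb4 l)).const_mul _]
      exact Finset.sum_congr rfl fun l _ => by rw [integral_const_mul, hprod]
    rw [hBv, hCv, hprod k k]
    have e1 : ∑ j : Fin 4, paperVecs k j * (gramM k (emb4 j) / 12)
        = (∑ j : Fin 4, paperVecs k j * gramM k (emb4 j)) / 12 := by
      rw [Finset.sum_div]
      exact Finset.sum_congr rfl fun j _ => by ring
    have e2 : ∑ j : Fin 4, ∑ l : Fin 4,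
        (paperVecs k j * paperVecs k l) * (gramM (emb4 j) (emb4 l) / 12)
        = (∑ j : Fin 4, ∑ l : Fin 4,
            (paperVecs k j * paperVecs k l) * gramM (emb4 j) (emb4 l)) / 12 := by
      rw [Finset.sum_div]
      refine Finset.sum_congr rfl fun j _ => ?_
      rw [Finset.sum_div]
      exact Finset.sum_congr rfl fun l _ => by ring
    rw [e1, e2]
    have := zero_var_id k
    linarith
  -- step 2 : h k = D k a.e.
  have hae : ∀ k, (fun ω => h k ω) =ᵐ[μ] D k := by
    intro k
    have hdiff : Integrable (fun ω => (h k ω - D k ω)^2) μ := by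
      refine hint _ (25/4) (((hmeas k).sub (Dmeas k)).pow_const 2) (fun ω => ?_)
      rw [abs_pow]
      calc |h k ω - D k ω| ^ 2 ≤ (5/2 : ℝ)^2 := by
            have := abs_sub (h k ω) (D k ω)
            have h1 : |h k ω - D k ω| ≤ |h k ω| + |D k ω| := abs_sub _ _
            have := hbd k ω
            have := Dbd k ω
            have : |h k ω - D k ω| ≤ 5/2 := by linarith
            exact pow_le_pow_left₀ (abs_nonneg _) this 2
        _ = 25/4 := by norm_num
    have := (integral_eq_zero_iff_of_nonneg (fun ω => sq_nonneg _) hdiff).mp (hzero k)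
    filter_upwards [this] with ω hω
    have : (h k ω - D k ω)^2 = 0 := hω
    have := pow_eq_zero_iff (n := 2) (by norm_num) |>.mp this
    linarith [this]
  -- step 3 : fourth moments of D
  have hD4 : ∀ k, ∫ ω, (D k ω)^4 ∂μ = 1/80 := by
    intro k
    rw [← h4 k]
    refine integral_congr_ae ?_
    filter_upwards [hae k] with ω hω
    rw [hω]
  have intD4 : ∀ k, Integrable (fun ω => (D k ω)^4) μ := by
    intro k
    refine hint _ 16 ((Dmeas k).pow_const 4) (fun ω => ?_)
    rw [abs_pow]
    calc |D k ω| ^ 4 ≤ (2:ℝ)^4 := pow_le_pow_left₀ (abs_nonneg _) (Dbd k ω) 4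
      _ = 16 := by norm_num
  -- step 4 : quartic identity and conclusion
  set Q : Ω → ℝ := fun ω => ∑ j : Fin 4, (h (emb4 j) ω)^2 with hQ
  have hQmeas : Measurable Q :=
    Finset.measurable_sum _ (fun j _ => (hmeas (emb4 j)).pow_const 2)
  have hQ0 : ∀ ω, 0 ≤ Q ω := fun ω => Finset.sum_nonneg fun j _ => sq_nonneg _
  have hQ1bd : ∀ ω, Q ω ≤ 1 := by
    intro ω
    calc Q ω ≤ ∑ _j : Fin 4, (1/4 : ℝ) := by
          refine Finset.sum_le_sum fun j _ => ?_
          have := hbd (emb4 j) ω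
          nlinarith [abs_nonneg (h (emb4 j) ω), sq_abs (h (emb4 j) ω)]
      _ = 1 := by norm_num
  have intQ : Integrable Q μ :=
    hint _ 1 hQmeas (fun ω => by rw [abs_of_nonneg (hQ0 ω)]; exact hQ1bd ω)
  have intQ2 : Integrable (fun ω => (Q ω)^2) μ := by
    refine hint _ 1 (hQmeas.pow_const 2) (fun ω => ?_)
    rw [abs_pow, abs_of_nonneg (hQ0 ω)]
    nlinarith [hQ0 ω, hQ1bd ω]
  have hQint : ∫ ω, Q ω ∂μ = 1/3 := by
    rw [hQ, integral_finset_sum _ (fun j _ => hint _ 1 ((hmeas (emb4 j)).pow_const 2)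
      (fun ω => by
        rw [abs_pow]
        calc |h (emb4 j) ω| ^ 2 ≤ (1/2:ℝ)^2 := pow_le_pow_left₀ (abs_nonneg _) (hbd _ ω) 2
          _ ≤ 1 := by norm_num))]
    simp only [h2]
    simp
    norm_num
  have hQ2int : ∫ ω, (Q ω)^2 ∂μ = 1/10 := by
    have hpt : (fun ω => ∑ k : Fin 12, (D k ω)^4) = fun ω => 3/2 * (Q ω)^2 := by
      funext ω
      exact quartic_id (fun j => h (emb4 j) ω)
    have hs : ∫ ω, (∑ k : Fin 12, (D k ω)^4) ∂μ = 3/20 := by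
      rw [integral_finset_sum _ (fun k _ => intD4 k)]
      simp only [hD4]
      simp
      norm_num
    rw [hpt] at hs
    rw [integral_const_mul] at hs
    linarith
  have hfin : (0:ℝ) ≤ ∫ ω, (Q ω - 1/3)^2 ∂μ := integral_nonneg fun ω => sq_nonneg _
  have hexp : ∫ ω, (Q ω - 1/3)^2 ∂μ = 1/10 - (2/3) * (1/3) + 1/9 := by
    have hpt : (fun ω => (Q ω - 1/3)^2) = fun ω => (Q ω)^2 - (2/3) * Q ω + 1/9 := by
      funext ω; ring
    have hsub : Integrable (fun ω => (Q ω)^2 - (2/3) * Q ω) μ :=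
      intQ2.sub (intQ.const_mul (2/3))
    rw [hpt, integral_add hsub (integrable_const _),
      integral_sub intQ2 (intQ.const_mul (2/3)), integral_const_mul, integral_const,
      hQ2int, hQint]
    simp [measure_univ]
  rw [hexp] at hfin
  norm_num at hfin

/-- The Gram matrix M is standardized symmetric positive semidefinite but not a Spearman's
rho matrix; hence the 12 × 12 Spearman's rho matrices form a proper subset of the
standardized symmetric positive semidefinite matrices. -/
theorem gramM_not_spearman :
    gramM.PosSemidef ∧ (∀ i, gramM i i = 1) ∧ ¬ IsSpearmanMatrix gramM ∧
    {R : Matrix (Fin 12) (Fin 12) ℝ | IsSpearmanMatrix R}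
      ⊂ {R : Matrix (Fin 12) (Fin 12) ℝ | R.PosSemidef ∧ ∀ i, R i i = 1} := by
  have hPSD : gramM.PosSemidef := by
    have hM : gramM = paperVecs * paperVecsᴴ := by
      rw [gramM, Matrix.conjTranspose]
      congr 1
    rw [hM]
    exact Matrix.posSemidef_self_mul_conjTranspose paperVecs
  refine ⟨hPSD, gramM_diag, gramM_not_spearman', ?_⟩
  have hsub : {R : Matrix (Fin 12) (Fin 12) ℝ | IsSpearmanMatrix R}
      ⊆ {R : Matrix (Fin 12) (Fin 12) ℝ | R.PosSemidef ∧ ∀ i, R i i = 1} :=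
    fun R hR => spearman_psd hR
  rw [Set.ssubset_def]
  exact ⟨hsub, fun hts => gramM_not_spearman' (hts ⟨hPSD, gramM_diag⟩)⟩
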